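/- Let G be a finite connected 4-valent graph. A minimal Mom-subgraph of G is a coloring of the edges of G by colors {t, c, f} such that the t-colored edges form a spanning tree and exactly one edge has color c. Then any two minimal Mom-subgraphs of G are connected by a finite sequence of moves of types (m1) and (m2), where: (m1) swaps the colors of the c-edge and an f-edge sharing a vertex with it; (m2) swaps the colors of a t-edge e and an f- or c-edge e' sharing a vertex with e, provided the t-colored edges after the swap still form a spanning tree. -/

import Mathlib

/-- A finite multigraph on vertex type `V` with edge type `E`:
each edge has an unordered pair of endpoints (a loop has equal endpoints). -/
structure Multigraph (V E : Type) where
  ends : E → Sym2 V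

namespace Multigraph

variable {V E : Type}

/-- Degree of a vertex: number of edge-ends at it (a loop counts twice). -/
def deg [Fintype E] [DecidableEq V] (G : Multigraph V E) (v : V) : ℕ :=
  ∑ e : E, (if G.ends e = s(v, v) then 2 else if v ∈ G.ends e then 1 else 0)

/-- Degree of a vertex within a set of edges. -/
def degOn [DecidableEq V] (G : Multigraph V E) (S : Finset E) (v : V) : ℕ :=
  ∑ e ∈ S, (if G.ends e = s(v, v) then 2 else if v ∈ G.ends e then 1 else 0)

/-- Two vertices are joined by a walk using only edges in `S`. -/
def Reach (G : Multigraph V E) (S : Finset E) : V → V → Prop :=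
  Relation.ReflTransGen (fun u w => ∃ e ∈ S, G.ends e = s(u, w))

/-- A set of edges connects all the vertices of `G`. -/
def ConnectedOn (G : Multigraph V E) (S : Finset E) : Prop :=
  ∀ u v : V, G.Reach S u v

/-- `G` is connected (as a graph, using all its edges). -/
def Connected [Fintype E] (G : Multigraph V E) : Prop :=
  G.ConnectedOn Finset.univ

/-- A set of edges is acyclic iff every edge in it is a bridge: its endpoints
are not joined by a walk avoiding it.  (In particular it has no loops.) -/
def Acyclic [DecidableEq E] (G : Multigraph V E) (S : Finset E) : Prop :=
  ∀ e ∈ S, ∀ u w : V, G.ends e = s(u, w) → ¬ G.Reach (S.erase e) u w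

/-- A spanning tree: a connected acyclic spanning set of edges. -/
def IsSpanningTree [DecidableEq E] (G : Multigraph V E) (T : Finset E) : Prop :=
  G.ConnectedOn T ∧ G.Acyclic T

/-- `G` is 4-valent: every vertex has degree 4. -/
def IsFourValent [Fintype E] [DecidableEq V] (G : Multigraph V E) : Prop :=
  ∀ v : V, G.deg v = 4

lemma reach_symm (G : Multigraph V E) (S : Finset E) :
    Symmetric (G.Reach S) := by
  intro a b h
  induction h with
  | refl => exact Relation.ReflTransGen.refl
  | tail _ hst ih =>
    obtain ⟨e, he, hew⟩ := hst
    exact Relation.ReflTransGen.head ⟨e, he, hew.trans (Sym2.eq_swap)⟩ ih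

/-- Reachability through `S` as an equivalence relation on vertices. -/
def reachSetoid (G : Multigraph V E) (S : Finset E) : Setoid V :=
  ⟨G.Reach S, ⟨fun _ => Relation.ReflTransGen.refl,
    fun h => G.reach_symm S h, fun h h' => Relation.ReflTransGen.trans h h'⟩⟩

/-- Number of connected components of the subgraph with edge set `S`
(every vertex of `G` counts). -/
noncomputable def numComponents (G : Multigraph V E) (S : Finset E) : ℕ :=
  Nat.card (Quotient (G.reachSetoid S))

end Multigraph

/-- The three colors of a Mom-subgraph. -/
inductive MomColor
  | t | c | f
  deriving DecidableEq

namespace Multigraph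

variable {V E : Type}

/-- The set of `t`-colored edges of a coloring. -/
def tSet [Fintype E] [DecidableEq E] (Γ : E → MomColor) : Finset E :=
  Finset.univ.filter fun e => Γ e = MomColor.t

/-- A minimal Mom-subgraph: a `{t,c,f}`-coloring of the edges such that the
`t`-edges form a spanning tree and exactly one edge has color `c`. -/
def IsMinimalMom [Fintype E] [DecidableEq V] [DecidableEq E]
    (G : Multigraph V E) (Γ : E → MomColor) : Prop :=
  G.IsSpanningTree (tSet Γ) ∧ (∃! e : E, Γ e = MomColor.c)

/-- Swap the colors of the edges `e` and `e'`. -/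
def colorSwap [DecidableEq E] (Γ : E → MomColor) (e e' : E) : E → MomColor :=
  Function.update (Function.update Γ e (Γ e')) e' (Γ e)

/-- The admissible moves (m1) and (m2) on minimal Mom-subgraphs:
(m1) swaps the colors of the `c`-edge and an `f`-edge sharing a vertex with it;
(m2) swaps the colors of a `t`-edge `e` and a non-`t` edge `e'` sharing a
vertex with `e`, provided the `t`-edges after the swap still form a spanning
tree. -/
def MinMove [Fintype E] [DecidableEq V] [DecidableEq E]
    (G : Multigraph V E) (Γ Γ' : E → MomColor) : Prop :=
  -- (m1)
  (∃ e e' : E, ∃ w : V, Γ e = MomColor.c ∧ Γ e' = MomColor.f ∧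
      w ∈ G.ends e ∧ w ∈ G.ends e' ∧ Γ' = colorSwap Γ e e') ∨
  -- (m2)
  (∃ e e' : E, ∃ w : V, Γ e = MomColor.t ∧ Γ e' ≠ MomColor.t ∧
      w ∈ G.ends e ∧ w ∈ G.ends e' ∧ Γ' = colorSwap Γ e e' ∧
      G.IsSpanningTree (tSet Γ'))

end Multigraph

namespace Multigraph

section AuxLemmas
variable {V E : Type}
variable (G : Multigraph V E)
set_option linter.unusedSectionVars false
set_option linter.unusedVariables false
set_option linter.unnecessarySeqFocus false


lemma reach_mono {S T : Finset E} (hST : S ⊆ T) {u v : V} (h : G.Reach S u v) :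
    G.Reach T u v :=
  Relation.ReflTransGen.mono (r := fun u w => ∃ e ∈ S, G.ends e = s(u, w))
    (p := fun u w => ∃ e ∈ T, G.ends e = s(u, w))
    (fun _ _ h => h.imp (fun _ h => ⟨hST h.1, h.2⟩)) _ _ h

lemma reach_single {S : Finset E} {e : E} {u v : V} (he : e ∈ S)
    (h : G.ends e = s(u, v)) : G.Reach S u v :=
  Relation.ReflTransGen.single ⟨e, he, h⟩

lemma reach_insert_split [DecidableEq E] {X : Finset E} {g : E} {p q a b : V} (hg : G.ends g = s(p, q))
    (h : G.Reach (insert g X) a b) :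
    G.Reach X a b ∨ (G.Reach X a p ∧ G.Reach X q b) ∨ (G.Reach X a q ∧ G.Reach X p b) := by
  induction h with
  | refl => exact Or.inl .refl
  | @tail w c hab step ih =>
    obtain ⟨e, he, hends⟩ := step
    rcases Finset.mem_insert.mp he with rfl | heX
    · rw [hg] at hends
      rcases Sym2.eq_iff.mp hends with ⟨rfl, rfl⟩ | ⟨rfl, rfl⟩
      · rcases ih with h1 | ⟨h1, h2⟩ | ⟨h1, h2⟩
        · exact Or.inr (Or.inl ⟨h1, .refl⟩)
        · exact Or.inr (Or.inl ⟨h1, .refl⟩)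
        · exact Or.inl h1
      · rcases ih with h1 | ⟨h1, h2⟩ | ⟨h1, h2⟩
        · exact Or.inr (Or.inr ⟨h1, .refl⟩)
        · exact Or.inl h1
        · exact Or.inr (Or.inr ⟨h1, .refl⟩)
    · rcases ih with h1 | ⟨h1, h2⟩ | ⟨h1, h2⟩
      · exact Or.inl (h1.tail ⟨e, heX, hends⟩)
      · exact Or.inr (Or.inl ⟨h1, h2.tail ⟨e, heX, hends⟩⟩)
      · exact Or.inr (Or.inr ⟨h1, h2.tail ⟨e, heX, hends⟩⟩)

lemma tree_no_loop [DecidableEq E] {S : Finset E} (hS : G.Acyclic S) {e : E} (he : e ∈ S)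
    {u : V} (h : G.ends e = s(u, u)) : False :=
  hS e he u u h .refl


section Chains
variable [DecidableEq V] [DecidableEq E]
set_option linter.unusedSectionVars false

/-- A walk from `a` to `b` through the edges listed in `l`, all in `S`. -/
def IsChain (S : Finset E) : List E → V → V → Prop
  | [], a, b => a = b
  | (e :: l), a, b => e ∈ S ∧ ∃ w, G.ends e = s(a, w) ∧ IsChain S l w b

lemma ischain_mem {S : Finset E} : ∀ {l : List E} {a b : V}, G.IsChain S l a b →
    ∀ e ∈ l, e ∈ S := by
  intro l
  induction l with
  | nil => intro a b _ e he; simp at he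
  | cons f l ih =>
    rintro a b ⟨hf, w, hw, hl⟩ e he
    rcases List.mem_cons.mp he with rfl | he
    · exact hf
    · exact ih hl e he

lemma ischain_mono {S T : Finset E} (hST : S ⊆ T) : ∀ {l : List E} {a b : V},
    G.IsChain S l a b → G.IsChain T l a b := by
  intro l
  induction l with
  | nil => intro a b h; exact h
  | cons f l ih =>
    rintro a b ⟨hf, w, hw, hl⟩
    exact ⟨hST hf, w, hw, ih hl⟩

lemma ischain_reach {S : Finset E} : ∀ {l : List E} {a b : V},
    G.IsChain S l a b → G.Reach S a b := by
  intro l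
  induction l with
  | nil => rintro a b rfl; exact .refl
  | cons f l ih =>
    rintro a b ⟨hf, w, hw, hl⟩
    exact .trans (G.reach_single hf hw) (ih hl)

/-- From a walk extract a duplicate-free walk. -/
lemma extract {S : Finset E} {a b : V} (h : G.Reach S a b) :
    ∃ l : List E, G.IsChain S l a b ∧ l.Nodup := by
  suffices H : ∀ n (S : Finset E) (a b : V), S.card ≤ n → G.Reach S a b →
      ∃ l : List E, G.IsChain S l a b ∧ l.Nodup from H S.card S a b le_rfl h
  clear h S a b
  intro n
  induction n with
  | zero =>
    intro S a b hcard h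
    have hS : S = ∅ := Finset.card_eq_zero.mp (Nat.le_zero.mp hcard)
    subst hS
    rcases Relation.ReflTransGen.cases_head h with rfl | ⟨w, ⟨f, hf, hfw⟩, hwb⟩
    · exact ⟨[], rfl, List.nodup_nil⟩
    · simp at hf
  | succ n ih =>
  intro S a b hcard h
  rcases Relation.ReflTransGen.cases_head h with rfl | ⟨w, ⟨f, hf, hfw⟩, hwb⟩
  · exact ⟨[], rfl, List.nodup_nil⟩
  have hcard' : (S.erase f).card ≤ n := by
    have := Finset.card_erase_of_mem hf
    omega
  by_cases hr : G.Reach (S.erase f) a b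
  · obtain ⟨l, hl, hnd⟩ := ih _ a b hcard' hr
    exact ⟨l, G.ischain_mono (Finset.erase_subset _ _) hl, hnd⟩
  · have hwb' : G.Reach (S.erase f) w b := by
      have hS : S = insert f (S.erase f) := (Finset.insert_erase hf).symm
      rw [hS] at hwb
      rcases G.reach_insert_split hfw hwb with h1 | ⟨h1, h2⟩ | ⟨h1, h2⟩
      · exact h1
      · exact h2
      · exact absurd h2 hr
    obtain ⟨l, hl, hnd⟩ := ih _ w b hcard' hwb'
    refine ⟨f :: l, ⟨hf, w, hfw, G.ischain_mono (Finset.erase_subset _ _) hl⟩, ?_⟩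
    refine List.nodup_cons.mpr ⟨fun hmem => ?_, hnd⟩
    exact (Finset.notMem_erase f S) (G.ischain_mem hl f hmem)

/-- Walks can avoid loops. -/
lemma deloop {S S' : Finset E} (hsub : ∀ e ∈ S, (¬ ∃ x, G.ends e = s(x, x)) → e ∈ S')
    {a b : V} (h : G.Reach S a b) : G.Reach S' a b := by
  induction h with
  | refl => exact .refl
  | @tail w c hab step ih =>
    obtain ⟨e, he, hends⟩ := step
    by_cases hwc : w = c
    · subst hwc; exact ih
    · refine ih.tail ⟨e, hsub e he ?_, hends⟩
      rintro ⟨x, hx⟩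
      rw [hx, Sym2.eq_iff] at hends
      rcases hends with ⟨h1, h2⟩ | ⟨h1, h2⟩
      · exact hwc (h1.symm.trans h2)
      · exact hwc (h2.symm.trans h1)

lemma acyclic_subset {S T : Finset E} (hT : G.Acyclic T) (hST : S ⊆ T) : G.Acyclic S := by
  intro e he u w hw hr
  exact hT e (hST he) u w hw (G.reach_mono (Finset.erase_subset_erase _ hST) hr)

lemma conn_erase {S : Finset E} (hc : G.ConnectedOn S) {e : E} (he : e ∈ S) {u w : V}
    (hew : G.ends e = s(u, w)) (hr : G.Reach (S.erase e) u w) :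
    G.ConnectedOn (S.erase e) := by
  intro x y
  have hx : G.Reach (insert e (S.erase e)) x y := by
    rw [Finset.insert_erase he]; exact hc x y
  rcases G.reach_insert_split hew hx with h1 | ⟨h1, h2⟩ | ⟨h1, h2⟩
  · exact h1
  · exact (h1.trans hr).trans h2
  · exact (h1.trans (G.reach_symm _ hr)).trans h2

/-- Every connected spanning edge set contains a spanning tree. -/
lemma shrink {S : Finset E} (hc : G.ConnectedOn S) :
    ∃ T ⊆ S, G.IsSpanningTree T := by
  suffices H : ∀ n (S : Finset E), S.card ≤ n → G.ConnectedOn S →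
      ∃ T ⊆ S, G.IsSpanningTree T from H S.card S le_rfl hc
  clear hc S
  intro n
  induction n with
  | zero =>
    intro S hcard hc
    have hS : S = ∅ := Finset.card_eq_zero.mp (Nat.le_zero.mp hcard)
    exact ⟨S, le_rfl, hc, by subst hS; intro e he; simp at he⟩
  | succ n ih =>
  intro S hcard hc
  by_cases ha : G.Acyclic S
  · exact ⟨S, le_refl _, hc, ha⟩
  · simp only [Acyclic, not_forall] at ha
    obtain ⟨e, he, u, w, hew, hr⟩ := ha
    have hr' : G.Reach (S.erase e) u w := not_not.mp hr
    have hcard' : (S.erase e).card ≤ n := by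
      have := Finset.card_erase_of_mem he
      omega
    obtain ⟨T, hT, hst⟩ := ih (S.erase e) hcard' (G.conn_erase hc he hew hr')
    exact ⟨T, hT.trans (Finset.erase_subset _ _), hst⟩

/-- Exchange: replacing `f ∈ S` by an edge `h` crossing the cut gives a spanning tree. -/
lemma exchange {S : Finset E} (hst : G.IsSpanningTree S) {f h : E} (hf : f ∈ S)
    (hh : h ∉ S) {p q : V} (hpq : G.ends h = s(p, q))
    (hcut : ¬ G.Reach (S.erase f) p q) :
    G.IsSpanningTree (insert h (S.erase f)) := by
  obtain ⟨hc, ha⟩ := hst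
  obtain ⟨⟨x, y⟩, hxy⟩ := Quot.exists_rep (G.ends f)
  have hxy : G.ends f = s(x, y) := hxy.symm
  have hside : ∀ v : V, G.Reach (S.erase f) v x ∨ G.Reach (S.erase f) v y := by
    intro v
    have hv : G.Reach (insert f (S.erase f)) v x := by
      rw [Finset.insert_erase hf]; exact hc v x
    rcases G.reach_insert_split hxy hv with h1 | ⟨h1, h2⟩ | ⟨h1, h2⟩
    · exact Or.inl h1
    · exact Or.inl h1
    · exact Or.inr h1
  constructor
  · -- connectivity
    have key : ∀ v : V, G.Reach (insert h (S.erase f)) v p := by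
      have hsub : S.erase f ⊆ insert h (S.erase f) := Finset.subset_insert _ _
      have hhp : G.Reach (insert h (S.erase f)) p q :=
        G.reach_single (Finset.mem_insert_self _ _) hpq
      rcases hside p with hp | hp <;> rcases hside q with hq | hq
      · exact absurd (hp.trans (G.reach_symm _ hq)) hcut
      · intro v
        rcases hside v with hv | hv
        · exact G.reach_mono hsub (hv.trans (G.reach_symm _ hp))
        · exact ((G.reach_mono hsub (hv.trans (G.reach_symm _ hq))).trans
            (G.reach_symm _ hhp))
      · intro v
        rcases hside v with hv | hv
        · exact ((G.reach_mono hsub (hv.trans (G.reach_symm _ hq))).trans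
            (G.reach_symm _ hhp))
        · exact G.reach_mono hsub (hv.trans (G.reach_symm _ hp))
      · exact absurd (hp.trans (G.reach_symm _ hq)) hcut
    intro a b
    exact (key a).trans (G.reach_symm _ (key b))
  · -- acyclicity
    intro e he u w hew hr
    have hhe : h ∉ S.erase f := fun hx => hh (Finset.mem_of_mem_erase hx)
    rcases Finset.mem_insert.mp he with rfl | heS
    · rw [Finset.erase_insert hhe] at hr
      rw [hpq] at hew
      rcases Sym2.eq_iff.mp hew with ⟨rfl, rfl⟩ | ⟨rfl, rfl⟩
      · exact hcut hr
      · exact hcut (G.reach_symm _ hr)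
    · have hne : e ≠ h := fun hx => hh (hx ▸ Finset.mem_of_mem_erase heS)
      have hset : (insert h (S.erase f)).erase e = insert h ((S.erase f).erase e) := by
        rw [Finset.erase_insert_of_ne hne.symm]
      rw [hset] at hr
      have hsub : (S.erase f).erase e ⊆ S.erase e :=
        Finset.erase_subset_erase _ (Finset.erase_subset _ _)
      have hsub2 : (S.erase f).erase e ⊆ S.erase f := Finset.erase_subset _ _
      rcases G.reach_insert_split hpq hr with h1 | ⟨h1, h2⟩ | ⟨h1, h2⟩
      · exact ha e (Finset.mem_of_mem_erase heS) u w hew (G.reach_mono hsub h1)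
      · -- u ↝ p, q ↝ w : then p ↝ u - e - w ↝ q in S.erase f
        refine hcut (((G.reach_symm _ (G.reach_mono hsub2 h1)).trans
          (G.reach_single heS hew)).trans (G.reach_symm _ (G.reach_mono hsub2 h2)))
      · refine hcut (G.reach_symm _ (((G.reach_symm _ (G.reach_mono hsub2 h1)).trans
          (G.reach_single heS hew)).trans (G.reach_symm _ (G.reach_mono hsub2 h2))))
    
end Chains

section Colors
variable [Fintype V] [Fintype E] [DecidableEq V] [DecidableEq E]
set_option linter.unusedSectionVars false

lemma mem_tSet {Γ : E → MomColor} {z : E} : z ∈ tSet Γ ↔ Γ z = MomColor.t := by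
  simp [tSet]

lemma colorSwap_apply (Γ : E → MomColor) (x y z : E) :
    colorSwap Γ x y z = Γ (Equiv.swap x y z) := by
  unfold colorSwap
  rcases eq_or_ne z y with rfl | hzy
  · rw [Function.update_self, Equiv.swap_apply_right]
  · rw [Function.update_of_ne hzy]
    rcases eq_or_ne z x with rfl | hzx
    · rw [Function.update_self, Equiv.swap_apply_left]
    · rw [Function.update_of_ne hzx, Equiv.swap_apply_of_ne_of_ne hzx hzy]

lemma uniqueC_swap {Γ : E → MomColor} (h : ∃! z, Γ z = MomColor.c) (x y : E) :
    ∃! z, colorSwap Γ x y z = MomColor.c := by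
  obtain ⟨z0, hz0, hz0u⟩ := h
  refine ⟨Equiv.swap x y z0, ?_, ?_⟩
  · show colorSwap Γ x y _ = _
    rw [colorSwap_apply, Equiv.swap_apply_self]; exact hz0
  · intro z hz
    replace hz : colorSwap Γ x y z = MomColor.c := hz
    rw [colorSwap_apply] at hz
    have := hz0u _ hz
    have h2 : z = Equiv.swap x y z0 := by
      rw [← this, Equiv.swap_apply_self]
    exact h2

lemma tSet_swap_t {Γ : E → MomColor} {e e' : E} (he : Γ e = MomColor.t)
    (he' : Γ e' ≠ MomColor.t) :
    tSet (colorSwap Γ e e') = insert e' ((tSet Γ).erase e) := by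
  have hne : e ≠ e' := by rintro rfl; exact he' he
  ext z
  simp only [mem_tSet, Finset.mem_insert, Finset.mem_erase, colorSwap_apply]
  rcases eq_or_ne z e' with rfl | hz1
  · simp [Equiv.swap_apply_right, he]
  · rcases eq_or_ne z e with rfl | hz2
    · simp [Equiv.swap_apply_left, he', hne, hz1, mem_tSet]
    · rw [Equiv.swap_apply_of_ne_of_ne hz2 hz1]
      simp [hz1, hz2, mem_tSet]

lemma tSet_swap_nt {Γ : E → MomColor} {e e' : E} (he : Γ e ≠ MomColor.t)
    (he' : Γ e' ≠ MomColor.t) :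
    tSet (colorSwap Γ e e') = tSet Γ := by
  ext z
  simp only [mem_tSet, colorSwap_apply]
  rcases eq_or_ne z e' with rfl | hz1
  · rw [Equiv.swap_apply_right]
    simp [he, he']
  · rcases eq_or_ne z e with rfl | hz2
    · rw [Equiv.swap_apply_left]
      simp [he, he']
    · rw [Equiv.swap_apply_of_ne_of_ne hz2 hz1]

lemma colorSwap_other {Γ : E → MomColor} {e e' z : E} (h1 : z ≠ e) (h2 : z ≠ e') :
    colorSwap Γ e e' z = Γ z := by
  rw [colorSwap_apply, Equiv.swap_apply_of_ne_of_ne h1 h2]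

lemma cEdge_not_mem_tSet {Γ : E → MomColor} {a : E} (ha : Γ a = MomColor.c) :
    a ∉ tSet Γ := by
  rw [mem_tSet, ha]; simp

lemma mom_ext {V E : Type} [Fintype V] [Fintype E] [DecidableEq V] [DecidableEq E]
    {G : Multigraph V E} {Γ Γ' : E → MomColor} (h1 : G.IsMinimalMom Γ)
    (h2 : G.IsMinimalMom Γ') (ht : tSet Γ = tSet Γ') {a : E}
    (ha : Γ a = MomColor.c) (ha' : Γ' a = MomColor.c) : Γ = Γ' := by
  funext z
  by_cases hz : z ∈ tSet Γ
  · have hz' : z ∈ tSet Γ' := ht ▸ hz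
    rw [mem_tSet] at hz hz'
    rw [hz, hz']
  · have hz' : z ∉ tSet Γ' := ht ▸ hz
    rw [mem_tSet] at hz hz'
    rcases eq_or_ne z a with rfl | hza
    · rw [ha, ha']
    · have hc : Γ z ≠ MomColor.c := fun h => hza (h1.2.unique h ha)
      have hc' : Γ' z ≠ MomColor.c := fun h => hza (h2.2.unique h ha')
      cases hΓ : Γ z <;> cases hΓ' : Γ' z <;>
        simp_all

end Colors


section Cuts
variable [Fintype V] [Fintype E] [DecidableEq V] [DecidableEq E] (G : Multigraph V E)
set_option linter.unusedSectionVars false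

/-- If no edge of `X` crosses `A`, reachability preserves membership in `A`. -/
lemma cross (A : Finset V) {X : Finset E}
    (hX : ∀ e ∈ X, ∀ p q : V, G.ends e = s(p, q) → (p ∈ A ↔ q ∈ A))
    {u v : V} (h : G.Reach X u v) : u ∈ A ↔ v ∈ A := by
  induction h with
  | refl => rfl
  | @tail w c hab step ih =>
    obtain ⟨e, he, hends⟩ := step
    exact ih.trans (hX e he w c hends)

/-- In a 4-valent graph, every vertex cut is crossed by an even number of edges. -/
lemma cut_even (h4 : G.IsFourValent) (A : Finset V) :
    Even ((Finset.univ.filter fun e : E =>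
      ∃ p q : V, G.ends e = s(p, q) ∧ p ∈ A ∧ q ∉ A).card) := by
  classical
  set C := (Finset.univ.filter fun e : E =>
      ∃ p q : V, G.ends e = s(p, q) ∧ p ∈ A ∧ q ∉ A) with hC
  have key : ((∑ v ∈ A, G.deg v : ℕ) : ZMod 2) = (C.card : ZMod 2) := by
    have hswap : ∑ v ∈ A, G.deg v
        = ∑ e : E, ∑ v ∈ A, (if G.ends e = s(v, v) then 2 else if v ∈ G.ends e then 1 else 0) := by
      simp only [deg]
      rw [Finset.sum_comm]
    rw [hswap, Nat.cast_sum]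
    have hedge : ∀ e : E, ((∑ v ∈ A, (if G.ends e = s(v, v) then 2 else if v ∈ G.ends e then (1:ℕ) else 0) : ℕ) : ZMod 2)
        = if e ∈ C then 1 else 0 := by
      intro e
      obtain ⟨⟨x, y⟩, hxy⟩ := Quot.exists_rep (G.ends e)
      have hxy : G.ends e = s(x, y) := hxy.symm
      rcases eq_or_ne x y with rfl | hne
      · -- loop
        have hnotC : e ∉ C := by
          simp only [hC, Finset.mem_filter, Finset.mem_univ, true_and]
          rintro ⟨p, q, hpq, hp, hq⟩
          rw [hxy] at hpq
          rcases Sym2.eq_iff.mp hpq with ⟨rfl, rfl⟩ | ⟨rfl, rfl⟩ <;> exact hq hp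
        have : ∀ v ∈ A, (if G.ends e = s(v, v) then 2 else if v ∈ G.ends e then (1:ℕ) else 0)
            = if v = x then 2 else 0 := by
          intro v _
          rw [hxy]
          rcases eq_or_ne v x with rfl | hvx
          · simp
          · simp [Sym2.eq_iff, Sym2.mem_iff, hvx, Ne.symm hvx]
        rw [Finset.sum_congr rfl this, Finset.sum_ite_eq' A x (fun _ => 2), if_neg hnotC]
        split <;> decide
      · -- non-loop
        have hw : ∀ v ∈ A, (if G.ends e = s(v, v) then 2 else if v ∈ G.ends e then (1:ℕ) else 0)
            = (if v = x then 1 else 0) + (if v = y then 1 else 0) := by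
          intro v _
          rw [hxy]
          rcases eq_or_ne v x with rfl | hvx
          · simp [Sym2.eq_iff, Sym2.mem_iff, hne, Ne.symm hne]
          · rcases eq_or_ne v y with rfl | hvy
            · simp [Sym2.eq_iff, Sym2.mem_iff, hne, Ne.symm hne, hvx]
            · simp [Sym2.eq_iff, Sym2.mem_iff, hvx, hvy, Ne.symm hvx, Ne.symm hvy]
        rw [Finset.sum_congr rfl hw, Finset.sum_add_distrib,
          Finset.sum_ite_eq' A x (fun _ => 1), Finset.sum_ite_eq' A y (fun _ => 1)]
        have hmemC : e ∈ C ↔ ((x ∈ A ∧ y ∉ A) ∨ (y ∈ A ∧ x ∉ A)) := by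
          simp only [hC, Finset.mem_filter, Finset.mem_univ, true_and]
          constructor
          · rintro ⟨p, q, hpq, hp, hq⟩
            rw [hxy] at hpq
            rcases Sym2.eq_iff.mp hpq with ⟨rfl, rfl⟩ | ⟨rfl, rfl⟩
            · exact Or.inl ⟨hp, hq⟩
            · exact Or.inr ⟨hp, hq⟩
          · rintro (⟨h1, h2⟩ | ⟨h1, h2⟩)
            · exact ⟨x, y, hxy, h1, h2⟩
            · exact ⟨y, x, hxy.trans Sym2.eq_swap, h1, h2⟩
        by_cases hx : x ∈ A <;> by_cases hy : y ∈ A <;>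
          simp [hx, hy, hmemC] <;> decide
    rw [Finset.sum_congr rfl (fun e _ => hedge e), Finset.sum_boole]
    congr 1
    simp [Finset.filter_mem_eq_inter]
  have hA : ((∑ v ∈ A, G.deg v : ℕ) : ZMod 2) = 0 := by
    have : ∑ v ∈ A, G.deg v = 4 * A.card := by
      rw [Finset.sum_congr rfl (fun v _ => h4 v), Finset.sum_const, smul_eq_mul]
      ring
    rw [this]
    push_cast
    have h2 : (4 : ZMod 2) = 0 := by decide
    rw [h2, zero_mul]
  rw [hA] at key
  exact (even_iff_two_dvd).mpr ((ZMod.natCast_eq_zero_iff _ 2).mp key.symm)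

/-- If removing edges `x, h'` disconnects the graph, while the endpoints of `x`
are joined in `S ∖ {h'}`, we get a contradiction; so the rest stays connected. -/
lemma dicho (h4 : G.IsFourValent) (hconn : G.Connected) {S : Finset E}
    (hS : G.IsSpanningTree S) {x h' : E} (hx : x ∉ S) (hh : h' ∈ S)
    {α β : V} (hαβ : G.ends x = s(α, β)) (hr : G.Reach (S.erase h') α β) :
    G.ConnectedOn ((Finset.univ.erase x).erase h') := by
  classical
  by_contra hcon
  simp only [ConnectedOn, not_forall] at hcon
  obtain ⟨u0, v0, hno⟩ := hcon
  set W := ((Finset.univ : Finset E).erase x).erase h' with hW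
  set A := Finset.univ.filter (fun v => G.Reach W u0 v) with hA
  have hu0 : u0 ∈ A := by
    simp only [hA, Finset.mem_filter, Finset.mem_univ, true_and]
    exact .refl
  have hv0 : v0 ∉ A := by
    simp only [hA, Finset.mem_filter, Finset.mem_univ, true_and]
    exact hno
  set C := Finset.univ.filter
    (fun e : E => ∃ p q : V, G.ends e = s(p, q) ∧ p ∈ A ∧ q ∉ A) with hCdef
  have hCsub : C ⊆ {x, h'} := by
    intro e heC
    simp only [hCdef, Finset.mem_filter, Finset.mem_univ, true_and] at heC
    obtain ⟨p, q, hpq, hp, hq⟩ := heC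
    by_contra hne
    simp only [Finset.mem_insert, Finset.mem_singleton, not_or] at hne
    have heW : e ∈ W := by
      simp only [hW, Finset.mem_erase, Finset.mem_univ, and_true]
      exact ⟨hne.2, hne.1⟩
    have hqA : q ∈ A := by
      simp only [hA, Finset.mem_filter, Finset.mem_univ, true_and] at hp ⊢
      exact hp.tail ⟨e, heW, hpq⟩
    exact hq hqA
  have hCne : C.Nonempty := by
    by_contra hemp
    have hnocross : ∀ e ∈ (Finset.univ : Finset E), ∀ p q : V,
        G.ends e = s(p, q) → (p ∈ A ↔ q ∈ A) := by
      intro e _ p q hpq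
      constructor
      · intro hp; by_contra hq
        exact hemp ⟨e, by
          simp only [hCdef, Finset.mem_filter, Finset.mem_univ, true_and]
          exact ⟨p, q, hpq, hp, hq⟩⟩
      · intro hq; by_contra hp
        exact hemp ⟨e, by
          simp only [hCdef, Finset.mem_filter, Finset.mem_univ, true_and]
          exact ⟨q, p, hpq.trans Sym2.eq_swap, hq, hp⟩⟩
    exact hv0 ((G.cross A hnocross (hconn u0 v0)).mp hu0)
  have hxh : x ≠ h' := fun hxe => hx (hxe ▸ hh)
  have hC2 : C = {x, h'} := by
    have hcard2 : ({x, h'} : Finset E).card = 2 := Finset.card_pair hxh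
    have hle : C.card ≤ 2 := hcard2 ▸ Finset.card_le_card hCsub
    have hge : 1 ≤ C.card := Finset.card_pos.mpr hCne
    have heven : Even C.card := G.cut_even h4 A
    have : C.card = 2 := by
      rcases heven with ⟨k, hk⟩
      omega
    exact Finset.eq_of_subset_of_card_le hCsub (by omega)
  have hxC : x ∈ C := hC2 ▸ Finset.mem_insert_self x {h'}
  simp only [hCdef, Finset.mem_filter, Finset.mem_univ, true_and] at hxC
  obtain ⟨p, q, hpq, hp, hq⟩ := hxC
  rw [hαβ] at hpq
  have hnc : ∀ e ∈ S.erase h', ∀ p' q' : V, G.ends e = s(p', q') → (p' ∈ A ↔ q' ∈ A) := by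
    intro e he p' q' hpq'
    have heS := Finset.mem_of_mem_erase he
    have hene : e ≠ h' := Finset.ne_of_mem_erase he
    have henx : e ≠ x := fun h => hx (h ▸ heS)
    constructor
    · intro hp'; by_contra hq'
      have heC : e ∈ C := by
        simp only [hCdef, Finset.mem_filter, Finset.mem_univ, true_and]
        exact ⟨p', q', hpq', hp', hq'⟩
      rw [hC2] at heC
      simp only [Finset.mem_insert, Finset.mem_singleton] at heC
      tauto
    · intro hq'; by_contra hp'
      have heC : e ∈ C := by
        simp only [hCdef, Finset.mem_filter, Finset.mem_univ, true_and]
        exact ⟨q', p', hpq'.trans Sym2.eq_swap, hq', hp'⟩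
      rw [hC2] at heC
      simp only [Finset.mem_insert, Finset.mem_singleton] at heC
      tauto
  have hiff := G.cross A hnc hr
  rcases Sym2.eq_iff.mp hpq with ⟨rfl, rfl⟩ | ⟨rfl, rfl⟩
  · exact hq (hiff.mp hp)
  · exact hq (hiff.mpr hp)

end Cuts

section Rot
variable [Fintype V] [Fintype E] [DecidableEq V] [DecidableEq E] (G : Multigraph V E)
set_option linter.unusedSectionVars false

lemma ischain_erase {S : Finset E} {f : E} : ∀ {l : List E} {a b : V},
    G.IsChain S l a b → f ∉ l → G.IsChain (S.erase f) l a b := by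
  intro l
  induction l with
  | nil => intro a b h _; exact h
  | cons e l ih =>
    rintro a b ⟨he, w, hw, hl⟩ hf
    rw [List.mem_cons, not_or] at hf
    exact ⟨Finset.mem_erase.mpr ⟨Ne.symm hf.1, he⟩, w, hw, ih hl hf.2⟩

/-- The rotation lemma: starting from a minimal Mom-subgraph `Γ` and an edge
`h ∈ T₂` not in the tree of `Γ`, rotating along a walk strictly decreases the
distance to the target tree `T₂`. -/
lemma rotA {T₂ : Finset E} (hT₂ : G.IsSpanningTree T₂) :
    ∀ (l : List E) (Γ : E → MomColor), G.IsMinimalMom Γ →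
    ∀ (h : E) (p q c0 : V), h ∉ tSet Γ → h ∈ T₂ → G.ends h = s(p, q) →
    G.IsChain (tSet Γ) l q c0 → l.Nodup →
    G.Reach ((T₂ ∩ tSet Γ) \ l.toFinset) p c0 →
    ∃ Γ', Relation.ReflTransGen G.MinMove Γ Γ' ∧ G.IsMinimalMom Γ' ∧
      (T₂ \ tSet Γ').card < (T₂ \ tSet Γ).card ∧
      tSet Γ' ⊆ tSet Γ ∪ T₂ ∧
      ∀ e : E, e ∉ tSet Γ → e ∉ T₂ → Γ' e = Γ e := by
  intro l
  induction l with
  | nil =>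
    rintro Γ hΓ h p q c0 hhS hhT hpq hchain hnd hinv
    exfalso
    have hqc : q = c0 := hchain
    subst hqc
    refine hT₂.2 h hhT p q hpq (G.reach_mono ?_ hinv)
    intro z hz
    rw [Finset.mem_sdiff, Finset.mem_inter] at hz
    exact Finset.mem_erase.mpr ⟨fun hze => hhS (hze ▸ hz.1.2), hz.1.1⟩
  | cons f2 l ih =>
    rintro Γ hΓ h p q c0 hhS hhT hpq ⟨hf2S, w2, hw2, hchain⟩ hnd hinv
    have hhf2 : h ≠ f2 := fun he => hhS (he ▸ hf2S)
    have hST : G.IsSpanningTree (tSet Γ) := hΓ.1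
    have hf2l : f2 ∉ l := (List.nodup_cons.mp hnd).1
    have hlS : ∀ e ∈ l, e ∈ tSet Γ := G.ischain_mem hchain
    have hhl : h ∉ l := fun hmem => hhS (hlS h hmem)
    -- the cut condition
    have hcut : ¬ G.Reach ((tSet Γ).erase f2) p q := by
      intro hr
      have htail : G.Reach ((tSet Γ).erase f2) w2 c0 :=
        G.ischain_reach (G.ischain_erase hchain hf2l)
      have hinv' : G.Reach ((tSet Γ).erase f2) p c0 := by
        refine G.reach_mono ?_ hinv
        intro z hz
        rw [Finset.mem_sdiff, Finset.mem_inter] at hz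
        refine Finset.mem_erase.mpr ⟨fun hze => hz.2 ?_, hz.1.2⟩
        rw [hze]; simp
      exact hST.2 f2 hf2S q w2 hw2
        ((G.reach_symm _ hr).trans (hinv'.trans (G.reach_symm _ htail)))
    have hΓt : Γ f2 = MomColor.t := mem_tSet.mp hf2S
    have hΓh : Γ h ≠ MomColor.t := fun hc => hhS (mem_tSet.mpr hc)
    have htS : tSet (colorSwap Γ f2 h) = insert h ((tSet Γ).erase f2) := tSet_swap_t hΓt hΓh
    have hst' : G.IsSpanningTree (tSet (colorSwap Γ f2 h)) := by
      rw [htS]; exact G.exchange hST hf2S hhS hpq hcut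
    have hmove : G.MinMove Γ (colorSwap Γ f2 h) := by
      refine Or.inr ⟨f2, h, q, hΓt, hΓh, ?_, ?_, rfl, hst'⟩
      · rw [hw2]; exact Sym2.mem_mk_left _ _
      · rw [hpq]; exact Sym2.mem_mk_right _ _
    have hmom' : G.IsMinimalMom (colorSwap Γ f2 h) := ⟨hst', uniqueC_swap hΓ.2 f2 h⟩
    have huntouched : ∀ e : E, e ∉ tSet Γ → e ∉ T₂ → colorSwap Γ f2 h e = Γ e := by
      intro e he1 he2
      exact colorSwap_other (fun hef => he1 (hef ▸ hf2S)) (fun heh => he2 (heh ▸ hhT))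
    have hsub1 : tSet (colorSwap Γ f2 h) ⊆ tSet Γ ∪ T₂ := by
      rw [htS]
      intro z hz
      rcases Finset.mem_insert.mp hz with rfl | hz'
      · exact Finset.mem_union_right _ hhT
      · exact Finset.mem_union_left _ (Finset.mem_of_mem_erase hz')
    by_cases hf2T : f2 ∈ T₂
    · -- continue rotating
      have hchain' : G.IsChain (tSet (colorSwap Γ f2 h)) l w2 c0 := by
        rw [htS]
        exact G.ischain_mono (Finset.subset_insert _ _) (G.ischain_erase hchain hf2l)
      have hhS' : f2 ∉ tSet (colorSwap Γ f2 h) := by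
        rw [htS]
        simp [hhf2.symm]
      have hinv' : G.Reach ((T₂ ∩ tSet (colorSwap Γ f2 h)) \ l.toFinset) q c0 := by
        have hstep : G.Reach ((T₂ ∩ tSet (colorSwap Γ f2 h)) \ l.toFinset) q p := by
          refine G.reach_single (e := h) ?_ (hpq.trans Sym2.eq_swap)
          rw [Finset.mem_sdiff, Finset.mem_inter, htS]
          exact ⟨⟨hhT, Finset.mem_insert_self _ _⟩, by simpa using hhl⟩
        refine hstep.trans (G.reach_mono ?_ hinv)
        intro z hz
        rw [Finset.mem_sdiff, Finset.mem_inter] at hz ⊢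
        obtain ⟨⟨hz1, hz2⟩, hz3⟩ := hz
        simp only [List.toFinset_cons, Finset.mem_insert, not_or] at hz3
        refine ⟨⟨hz1, ?_⟩, by simpa using hz3.2⟩
        rw [htS]
        exact Finset.mem_insert_of_mem (Finset.mem_erase.mpr ⟨hz3.1, hz2⟩)
      obtain ⟨Γ'', hreach, hmom'', hcard, hsub'', hunt''⟩ :=
        ih (colorSwap Γ f2 h) hmom' f2 q w2 c0 hhS' hf2T hw2 hchain'
          (List.nodup_cons.mp hnd).2 hinv'
      refine ⟨Γ'', Relation.ReflTransGen.head hmove hreach, hmom'', ?_, ?_, ?_⟩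
      · have hEq : T₂ \ tSet (colorSwap Γ f2 h) = insert f2 ((T₂ \ tSet Γ).erase h) := by
          ext z
          rw [htS]
          simp only [Finset.mem_sdiff, Finset.mem_insert, Finset.mem_erase]
          constructor
          · rintro ⟨hz1, hz2⟩
            rcases eq_or_ne z f2 with rfl | hzf2
            · exact Or.inl rfl
            · exact Or.inr ⟨fun hzh => hz2 (Or.inl hzh), hz1,
                fun hzS => hz2 (Or.inr ⟨hzf2, hzS⟩)⟩
          · rintro (rfl | ⟨hzh, hz1, hz2⟩)
            · exact ⟨hf2T, by simp [hhf2.symm]⟩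
            · refine ⟨hz1, ?_⟩
              rintro (rfl | ⟨h1, h2⟩)
              · exact hzh rfl
              · exact hz2 h2
        have hf2nm : f2 ∉ (T₂ \ tSet Γ).erase h := by
          simp [hf2S]
        have hhm : h ∈ T₂ \ tSet Γ := Finset.mem_sdiff.mpr ⟨hhT, hhS⟩
        have : (T₂ \ tSet (colorSwap Γ f2 h)).card = (T₂ \ tSet Γ).card := by
          rw [hEq, Finset.card_insert_of_notMem hf2nm, Finset.card_erase_of_mem hhm]
          have : 0 < (T₂ \ tSet Γ).card := Finset.card_pos.mpr ⟨h, hhm⟩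
          omega
        omega
      · exact hsub''.trans (Finset.union_subset hsub1 Finset.subset_union_right)
      · intro e he1 he2
        rw [hunt'' e ?_ he2, huntouched e he1 he2]
        intro hmem
        rcases Finset.mem_insert.mp (htS ▸ hmem) with rfl | hmem'
        · exact he2 hhT
        · exact he1 (Finset.mem_of_mem_erase hmem')
    · -- stop
      refine ⟨colorSwap Γ f2 h, Relation.ReflTransGen.single hmove, hmom', ?_, hsub1, huntouched⟩
      have hEq : T₂ \ tSet (colorSwap Γ f2 h) = (T₂ \ tSet Γ).erase h := by
        ext z
        rw [htS]
        constructor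
        · intro hmem
          obtain ⟨hz1, hz2⟩ := Finset.mem_sdiff.mp hmem
          have hzf2 : z ≠ f2 := fun hzf => hf2T (hzf ▸ hz1)
          refine Finset.mem_erase.mpr ⟨fun hzh => hz2 (hzh ▸ Finset.mem_insert_self _ _),
            Finset.mem_sdiff.mpr ⟨hz1, fun hzS => ?_⟩⟩
          exact hz2 (Finset.mem_insert_of_mem (Finset.mem_erase.mpr ⟨hzf2, hzS⟩))
        · intro hmem
          obtain ⟨hzh, hz12⟩ := Finset.mem_erase.mp hmem
          obtain ⟨hz1, hz2⟩ := Finset.mem_sdiff.mp hz12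
          refine Finset.mem_sdiff.mpr ⟨hz1, fun hcon => ?_⟩
          rcases Finset.mem_insert.mp hcon with rfl | hmem2
          · exact hzh rfl
          · exact hz2 (Finset.mem_of_mem_erase hmem2)
      rw [hEq]
      refine Finset.card_lt_card (Finset.erase_ssubset ?_)
      exact Finset.mem_sdiff.mpr ⟨hhT, hhS⟩


/-- Any minimal Mom-subgraph can be steered to any target spanning tree by
moves, without touching edges outside both trees. -/
lemma treeReach {T' : Finset E} (hT' : G.IsSpanningTree T') :
    ∀ (Γ : E → MomColor), G.IsMinimalMom Γ →
    ∃ Γ', Relation.ReflTransGen G.MinMove Γ Γ' ∧ G.IsMinimalMom Γ' ∧ tSet Γ' = T' ∧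
      ∀ e : E, e ∉ tSet Γ → e ∉ T' → Γ' e = Γ e := by
  suffices H : ∀ n (Γ : E → MomColor), G.IsMinimalMom Γ → (T' \ tSet Γ).card ≤ n →
      ∃ Γ', Relation.ReflTransGen G.MinMove Γ Γ' ∧ G.IsMinimalMom Γ' ∧ tSet Γ' = T' ∧
        ∀ e : E, e ∉ tSet Γ → e ∉ T' → Γ' e = Γ e by
    intro Γ hΓ
    exact H _ Γ hΓ le_rfl
  intro n
  induction n with
  | zero =>
    intro Γ hΓ hcard
    have hempty : T' \ tSet Γ = ∅ := Finset.card_eq_zero.mp (Nat.le_zero.mp hcard)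
    have hsub : T' ⊆ tSet Γ := by
      intro z hz
      by_contra hzS
      exact (Finset.eq_empty_iff_forall_notMem.mp hempty z) (Finset.mem_sdiff.mpr ⟨hz, hzS⟩)
    have hsub2 : tSet Γ ⊆ T' := by
      intro e he
      by_contra heT
      obtain ⟨⟨x, y⟩, hxy⟩ := Quot.exists_rep (G.ends e)
      have hxy : G.ends e = s(x, y) := hxy.symm
      refine hΓ.1.2 e he x y hxy (G.reach_mono ?_ (hT'.1 x y))
      intro z hz
      exact Finset.mem_erase.mpr ⟨fun hze => heT (hze ▸ hz), hsub hz⟩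
    have : tSet Γ = T' := Finset.Subset.antisymm hsub2 hsub
    exact ⟨Γ, .refl, hΓ, this, fun _ _ _ => rfl⟩
  | succ n ih =>
    intro Γ hΓ hcard
    rcases Nat.lt_or_ge (T' \ tSet Γ).card (n + 1) with hlt | hge
    · exact ih Γ hΓ (Nat.lt_succ_iff.mp hlt)
    have hne : (T' \ tSet Γ).Nonempty := by
      rw [← Finset.card_pos]; omega
    obtain ⟨g0, hg0⟩ := hne
    obtain ⟨hg0T, hg0S⟩ := Finset.mem_sdiff.mp hg0
    obtain ⟨⟨a0, b0⟩, hab⟩ := Quot.exists_rep (G.ends g0)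
    have hab : G.ends g0 = s(a0, b0) := hab.symm
    obtain ⟨l, hl, hnd⟩ := G.extract (hΓ.1.1 a0 b0)
    obtain ⟨Γ1, hreach1, hmom1, hcard1, hsub1, hunt1⟩ :=
      G.rotA hT' l Γ hΓ g0 b0 a0 b0 hg0S hg0T (hab.trans Sym2.eq_swap) hl hnd .refl
    obtain ⟨Γ2, hreach2, hmom2, htS2, hunt2⟩ := ih Γ1 hmom1 (by omega)
    refine ⟨Γ2, hreach1.trans hreach2, hmom2, htS2, ?_⟩
    intro e he1 he2
    rw [hunt2 e ?_ he2, hunt1 e he1 he2]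
    intro hmem
    rcases Finset.mem_union.mp (hsub1 hmem) with h1 | h1
    · exact he1 h1
    · exact he2 h1


lemma colorSwap_snd {Γ : E → MomColor} (a h : E) : colorSwap Γ a h h = Γ a :=
  Function.update_self _ _ _

/-- The `(m1)` hop of the `c`-edge onto an adjacent `f`-edge. -/
lemma hopf {Γ : E → MomColor} (hΓ : G.IsMinimalMom Γ) {a h : E} (ha : Γ a = MomColor.c)
    (hh : Γ h = MomColor.f) {w : V} (hwa : w ∈ G.ends a) (hwh : w ∈ G.ends h) :
    G.MinMove Γ (colorSwap Γ a h) ∧ G.IsMinimalMom (colorSwap Γ a h) ∧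
      colorSwap Γ a h h = MomColor.c := by
  have hmove : G.MinMove Γ (colorSwap Γ a h) := Or.inl ⟨a, h, w, ha, hh, hwa, hwh, rfl⟩
  have hts : tSet (colorSwap Γ a h) = tSet Γ :=
    tSet_swap_nt (by rw [ha]; simp) (by rw [hh]; simp)
  refine ⟨hmove, ⟨by rw [hts]; exact hΓ.1, uniqueC_swap hΓ.2 a h⟩, ?_⟩
  rw [colorSwap_snd, ha]

/-- Moving the `c`-edge onto an adjacent edge `h`. -/
lemma hop (h4 : G.IsFourValent) (hconn : G.Connected) {Γ : E → MomColor}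
    (hΓ : G.IsMinimalMom Γ) {a h : E} (ha : Γ a = MomColor.c) (hne : h ≠ a)
    {w : V} (hwa : w ∈ G.ends a) (hwh : w ∈ G.ends h) :
    ∃ Γ', Relation.ReflTransGen G.MinMove Γ Γ' ∧ G.IsMinimalMom Γ' ∧
      Γ' h = MomColor.c := by
  classical
  have haS : a ∉ tSet Γ := cEdge_not_mem_tSet ha
  have hhc : Γ h ≠ MomColor.c := fun hc => hne (hΓ.2.unique hc ha)
  by_cases hhS : h ∈ tSet Γ
  · -- h is a tree edge
    obtain ⟨⟨α, β⟩, hab⟩ := Quot.exists_rep (G.ends a)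
    have hab : G.ends a = s(α, β) := hab.symm
    by_cases hcut : G.Reach ((tSet Γ).erase h) α β
    · -- re-root the tree away from both a and h, then do an (m1) hop
      have hW : G.ConnectedOn ((Finset.univ.erase a).erase h) :=
        G.dicho h4 hconn hΓ.1 haS hhS hab hcut
      obtain ⟨T'', hT''sub, hT''⟩ := G.shrink hW
      have haT'' : a ∉ T'' := by
        intro hmem
        have := hT''sub hmem
        simp [Finset.mem_erase] at this
      have hhT'' : h ∉ T'' := by
        intro hmem
        have := hT''sub hmem
        simp [Finset.mem_erase] at this
      obtain ⟨Γ1, hreach1, hmom1, hts1, hunt1⟩ := G.treeReach hT'' Γ hΓ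
      have ha1 : Γ1 a = MomColor.c := by rw [hunt1 a haS haT'', ha]
      have hh1 : Γ1 h = MomColor.f := by
        have hh1S : h ∉ tSet Γ1 := by rw [hts1]; exact hhT''
        have h1 : Γ1 h ≠ MomColor.t := fun hc => hh1S (mem_tSet.mpr hc)
        have h2 : Γ1 h ≠ MomColor.c := fun hc => hne (hmom1.2.unique hc ha1)
        cases hc : Γ1 h with
        | t => exact absurd hc h1
        | c => exact absurd hc h2
        | f => rfl
      obtain ⟨hmove, hmom2, hc2⟩ := G.hopf hmom1 ha1 hh1 hwa hwh
      exact ⟨colorSwap Γ1 a h, hreach1.tail hmove, hmom2, hc2⟩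
    · -- (m2) hop directly: swap the tree edge h with the c-edge a
      have hΓht : Γ h = MomColor.t := mem_tSet.mp hhS
      have hΓat : Γ a ≠ MomColor.t := by rw [ha]; simp
      have hts : tSet (colorSwap Γ h a) = insert a ((tSet Γ).erase h) :=
        tSet_swap_t hΓht hΓat
      have hst' : G.IsSpanningTree (tSet (colorSwap Γ h a)) := by
        rw [hts]; exact G.exchange hΓ.1 hhS haS hab hcut
      have hmove : G.MinMove Γ (colorSwap Γ h a) :=
        Or.inr ⟨h, a, w, hΓht, hΓat, hwh, hwa, rfl, hst'⟩
      refine ⟨colorSwap Γ h a, Relation.ReflTransGen.single hmove,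
        ⟨hst', uniqueC_swap hΓ.2 h a⟩, ?_⟩
      have : colorSwap Γ h a h = Γ a := by
        unfold colorSwap
        rw [Function.update_of_ne hne, Function.update_self]
      rw [this, ha]
  · -- h is a non-tree edge: (m1) hop
    have hhf : Γ h = MomColor.f := by
      have h1 : Γ h ≠ MomColor.t := fun hc => hhS (mem_tSet.mpr hc)
      cases hc : Γ h with
      | t => exact absurd hc h1
      | c => exact absurd hc hhc
      | f => rfl
    obtain ⟨hmove, hmom2, hc2⟩ := G.hopf hΓ ha hhf hwa hwh
    exact ⟨colorSwap Γ a h, Relation.ReflTransGen.single hmove, hmom2, hc2⟩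


/-- If the `c`-edge is already in the target position, finish with `treeReach`. -/
lemma finish {Γ₂ : E → MomColor} (hΓ₂ : G.IsMinimalMom Γ₂) {b : E}
    (hb : Γ₂ b = MomColor.c) {Γ : E → MomColor} (hΓ : G.IsMinimalMom Γ)
    (hΓb : Γ b = MomColor.c) :
    Relation.ReflTransGen G.MinMove Γ Γ₂ := by
  obtain ⟨Γ', hreach, hmom, hts, hunt⟩ := G.treeReach hΓ₂.1 Γ hΓ
  have hb' : Γ' b = MomColor.c := by
    rw [hunt b (cEdge_not_mem_tSet hΓb) (cEdge_not_mem_tSet hb), hΓb]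
  have : Γ' = Γ₂ := mom_ext hmom hΓ₂ hts hb' hb
  exact this ▸ hreach

/-- Walking the `c`-edge along an edge-path to its target position. -/
lemma movec (h4 : G.IsFourValent) (hconn : G.Connected)
    {Γ₂ : E → MomColor} (hΓ₂ : G.IsMinimalMom Γ₂) {b : E} (hb : Γ₂ b = MomColor.c) :
    ∀ (l : List E) (Γ : E → MomColor), G.IsMinimalMom Γ →
    ∀ (a : E) (z0 zb : V), Γ a = MomColor.c → z0 ∈ G.ends a → zb ∈ G.ends b →
    G.IsChain Finset.univ l z0 zb →
    Relation.ReflTransGen G.MinMove Γ Γ₂ := by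
  intro l
  induction l with
  | nil =>
    rintro Γ hΓ a z0 zb ha hza hzb hchain
    have hz : z0 = zb := hchain
    subst hz
    rcases eq_or_ne a b with rfl | hab
    · exact G.finish hΓ₂ hb hΓ ha
    · obtain ⟨Γ', hreach, hmom, hc⟩ := G.hop h4 hconn hΓ ha hab.symm hza hzb
      exact hreach.trans (G.finish hΓ₂ hb hmom hc)
  | cons h1 l ih =>
    rintro Γ hΓ a z0 zb ha hza hzb ⟨-, z1, hz1, hchain⟩
    rcases eq_or_ne a b with rfl | hab
    · exact G.finish hΓ₂ hb hΓ ha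
    rcases eq_or_ne h1 b with rfl | h1b
    · have hz0h1 : z0 ∈ G.ends h1 := by rw [hz1]; exact Sym2.mem_mk_left _ _
      obtain ⟨Γ', hreach, hmom, hc⟩ := G.hop h4 hconn hΓ ha hab.symm hza hz0h1
      exact hreach.trans (G.finish hΓ₂ hb hmom hc)
    rcases eq_or_ne h1 a with rfl | h1a
    · have hz1a : z1 ∈ G.ends h1 := by rw [hz1]; exact Sym2.mem_mk_right _ _
      exact ih Γ hΓ h1 z1 zb ha hz1a hzb hchain
    · have hz0h1 : z0 ∈ G.ends h1 := by rw [hz1]; exact Sym2.mem_mk_left _ _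
      obtain ⟨Γ', hreach, hmom, hc⟩ := G.hop h4 hconn hΓ ha h1a hza hz0h1
      have hz1h1 : z1 ∈ G.ends h1 := by rw [hz1]; exact Sym2.mem_mk_right _ _
      exact hreach.trans (ih Γ' hmom h1 z1 zb hc hz1h1 hzb hchain)

/-- Main theorem, auxiliary form. -/
lemma mainAux (h4 : G.IsFourValent) (hconn : G.Connected)
    (Γ₁ Γ₂ : E → MomColor) (h₁ : G.IsMinimalMom Γ₁) (h₂ : G.IsMinimalMom Γ₂) :
    Relation.ReflTransGen G.MinMove Γ₁ Γ₂ := by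
  classical
  obtain ⟨a, ha, -⟩ := h₁.2
  obtain ⟨b, hb, -⟩ := h₂.2
  obtain ⟨⟨α, β⟩, hA⟩ := Quot.exists_rep (G.ends a)
  have hA : G.ends a = s(α, β) := hA.symm
  obtain ⟨⟨x, y⟩, hB⟩ := Quot.exists_rep (G.ends b)
  have hB : G.ends b = s(x, y) := hB.symm
  set NL := Finset.univ.filter (fun e : E => ¬ ∃ v : V, G.ends e = s(v, v)) with hNL
  have hreachNL : G.Reach NL α x := by
    refine G.deloop ?_ (hconn α x)
    intro e _ hne
    simp only [hNL, Finset.mem_filter, Finset.mem_univ, true_and]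
    exact hne
  obtain ⟨l, hl, hnd⟩ := G.extract hreachNL
  refine G.movec h4 hconn h₂ hb l Γ₁ h₁ a α x ha ?_ ?_
    (G.ischain_mono (Finset.subset_univ _) hl)
  · rw [hA]; exact Sym2.mem_mk_left _ _
  · rw [hB]; exact Sym2.mem_mk_left _ _

end Rot


end AuxLemmas

end Multigraph

/-- Any two minimal Mom-subgraphs of a finite connected 4-valent graph are
connected by a finite sequence of moves (m1) and (m2). -/
theorem stmt_5 {V E : Type} [Fintype V] [Fintype E] [DecidableEq V] [DecidableEq E]
    (G : Multigraph V E) (h4 : G.IsFourValent) (hconn : G.Connected)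
    (Γ₁ Γ₂ : E → MomColor)
    (h₁ : G.IsMinimalMom Γ₁) (h₂ : G.IsMinimalMom Γ₂) :
    Relation.ReflTransGen (G.MinMove) Γ₁ Γ₂ := by
  exact G.mainAux h4 hconn Γ₁ Γ₂ h₁ h₂
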